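/- Consider the system of three quaternion matrix equations A_i X_i + Y_i B_i + C_i Z_i D_i + F_i Z_{i+1} G_i = E_i (i = 1, 2, 3) in the unknowns X₁, X₂, X₃, Y₁, Y₂, Y₃, Z₁, Z₂, Z₃, Z₄, where A_i ∈ ℍ^{m×k_i}, B_i ∈ ℍ^{o_i×n}, C_i, F_i ∈ ℍ^{m×q}, D_i, G_i ∈ ℍ^{p×n}, E_i ∈ ℍ^{m×n}, and the unknowns Z_i ∈ ℍ^{q×p} are shared between consecutive equations. Let 𝒟_i = (A_i, B_i, C_i, D_i, F_i, G_i, E_i). If each 𝒟_i (i = 1, 2, 3) satisfies the consistency conditions, each of the coupled data couple(𝒟₁, 𝒟₂) and couple(𝒟₂, 𝒟₃) satisfies the consistency conditions, and the doubly coupled data couple(couple(𝒟₁, 𝒟₂), couple(𝒟₂, 𝒟₃)) satisfies the consistency conditions, then the system has a solution. -/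

import Mathlib

open Matrix

noncomputable section

/-- The four Penrose equations over the quaternions: `X` is a Moore–Penrose
inverse of `A`. -/
def IsMP {m n : Type} [Fintype m] [Fintype n]
    (A : Matrix m n (Quaternion ℝ)) (X : Matrix n m (Quaternion ℝ)) : Prop :=
  A * X * A = A ∧ X * A * X = X ∧ (A * X)ᴴ = A * X ∧ (X * A)ᴴ = X * A

open scoped Classical

/-- `mp A` is the Moore–Penrose inverse `A†` of `A` (it exists and is unique for
quaternion matrices). -/
def mp {m n : Type} [Fintype m] [Fintype n]
    (A : Matrix m n (Quaternion ℝ)) : Matrix n m (Quaternion ℝ) :=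
  if h : ∃ X, IsMP A X then h.choose else 0

/-- `projL A = L_A = 1 - A† A`. -/
def projL {m n : Type} [Fintype m] [Fintype n] [DecidableEq n]
    (A : Matrix m n (Quaternion ℝ)) : Matrix n n (Quaternion ℝ) :=
  1 - mp A * A

/-- `projR A = R_A = 1 - A A†`. -/
def projR {m n : Type} [Fintype m] [Fintype n] [DecidableEq m]
    (A : Matrix m n (Quaternion ℝ)) : Matrix m m (Quaternion ℝ) :=
  1 - A * mp A

/-- The data `𝒟 = (A, B, C, D, F, G, E)` of a four-term equation
`A X + Y B + C Z D + F W G = E` with `A : m×k`, `B : o×n`, `C : m×q`, `D : p×n`,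
`F : m×l`, `G : s×n`, `E : m×n`. -/
structure QData (m k o n q p l s : Type) where
  A : Matrix m k (Quaternion ℝ)
  B : Matrix o n (Quaternion ℝ)
  C : Matrix m q (Quaternion ℝ)
  D : Matrix p n (Quaternion ℝ)
  F : Matrix m l (Quaternion ℝ)
  G : Matrix s n (Quaternion ℝ)
  E : Matrix m n (Quaternion ℝ)

namespace QData

variable {m k o n q p l s : Type}
  [Fintype m] [Fintype k] [Fintype o] [Fintype n] [Fintype q] [Fintype p]
  [Fintype l] [Fintype s]
  [DecidableEq m] [DecidableEq k] [DecidableEq o] [DecidableEq n]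
  [DecidableEq q] [DecidableEq p] [DecidableEq l] [DecidableEq s]

/-- `A₀ = R_A C`. -/
def A0 (d : QData m k o n q p l s) : Matrix m q (Quaternion ℝ) := projR d.A * d.C

/-- `B₀ = D L_B`. -/
def B0 (d : QData m k o n q p l s) : Matrix p n (Quaternion ℝ) := d.D * projL d.B

/-- `C₀ = R_A F`. -/
def C0 (d : QData m k o n q p l s) : Matrix m l (Quaternion ℝ) := projR d.A * d.F

/-- `D₀ = G L_B`. -/
def D0 (d : QData m k o n q p l s) : Matrix s n (Quaternion ℝ) := d.G * projL d.B

/-- `E₀ = R_A E L_B`. -/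
def E0 (d : QData m k o n q p l s) : Matrix m n (Quaternion ℝ) := projR d.A * d.E * projL d.B

/-- `M = R_{A₀} C₀`. -/
def M (d : QData m k o n q p l s) : Matrix m l (Quaternion ℝ) := projR d.A0 * d.C0

/-- `N = D₀ L_{B₀}`. -/
def N (d : QData m k o n q p l s) : Matrix s n (Quaternion ℝ) := d.D0 * projL d.B0

/-- `S = C₀ L_M`. -/
def S (d : QData m k o n q p l s) : Matrix m l (Quaternion ℝ) := d.C0 * projL d.M

/-- The consistency conditions
`R_M R_{A₀} E₀ = 0`, `E₀ L_{B₀} L_N = 0`, `R_{A₀} E₀ L_{D₀} = 0`, `R_{C₀} E₀ L_{B₀} = 0`. -/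
def Consistent (d : QData m k o n q p l s) : Prop :=
  projR d.M * projR d.A0 * d.E0 = 0 ∧
  d.E0 * projL d.B0 * projL d.N = 0 ∧
  projR d.A0 * d.E0 * projL d.D0 = 0 ∧
  projR d.C0 * d.E0 * projL d.B0 = 0

/-- The coupled data `couple(𝒟, 𝒟')` of two four-term data sharing row/column spaces. -/
def couple {k' o' l' s' : Type}
    [Fintype k'] [Fintype o'] [Fintype l'] [Fintype s']
    [DecidableEq k'] [DecidableEq o'] [DecidableEq l'] [DecidableEq s']
    (d : QData m k o n q p l s) (d' : QData m k' o' n l s l' s') :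
    QData l (l ⊕ l) (s ⊕ s) s l s l' s' where
  A := Matrix.fromCols (projL d.M * projL d.S) (-(projL d'.A0))
  B := Matrix.fromRows (projR d.D0) (-(projR d'.B0))
  C := projL d.M
  D := projR d.N
  F := mp d'.A0 * d'.S
  G := projR d'.N * d'.D0 * mp d'.B0
  E := mp d.M * d.E0 * mp d.D0 + mp d.S * d.S * mp d.C0 * d.E0 * mp d.N
      - mp d'.A0 * d'.E0 * mp d'.B0
      + mp d'.A0 * d'.C0 * mp d'.M * d'.E0 * mp d'.B0
      + mp d'.A0 * d'.S * mp d'.C0 * d'.E0 * mp d'.N * d'.D0 * mp d'.B0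

end QData

namespace MPAux

local notation "ℍ" => Quaternion ℝ

instance : StarModule ℝ ℍ := ⟨fun r q => by ext <;> simp⟩

lemma smul_one_coe (r : ℝ) : r • (1 : ℍ) = (r : ℍ) := by
  rw [show (1:ℍ) = ((1:ℝ):ℍ) by norm_num, Quaternion.smul_coe, mul_one]

lemma conjT_smul {m n : Type} (r : ℝ) (M : Matrix m n ℍ) : (r • M)ᴴ = r • Mᴴ := by
  rw [Matrix.conjTranspose_smul]; simp

lemma col_herm_mul_self {m : Type} [Fintype m] (e : Matrix m (Fin 1) ℍ) :
    eᴴ * e = (∑ i, Quaternion.normSq (e i 0) : ℝ) • (1 : Matrix (Fin 1) (Fin 1) ℍ) := by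
  refine Matrix.ext fun i j => ?_
  obtain rfl : i = 0 := Subsingleton.elim _ _
  obtain rfl : j = 0 := Subsingleton.elim _ _
  simp only [Matrix.mul_apply, Matrix.conjTranspose_apply, Matrix.smul_apply,
    Matrix.one_apply_eq, smul_one_coe]
  rw [show ((∑ i, Quaternion.normSq (e i 0) : ℝ) : ℍ)
      = ∑ i, ((Quaternion.normSq (e i 0) : ℝ) : ℍ) by
    simp only [← Quaternion.algebraMap_def, map_sum]]
  exact Finset.sum_congr rfl fun k _ => Quaternion.star_mul_self (e k 0)

lemma col_sum_normSq_ne {m : Type} [Fintype m] {e : Matrix m (Fin 1) ℍ} (he : e ≠ 0) :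
    (∑ i, Quaternion.normSq (e i 0) : ℝ) ≠ 0 := by
  intro h
  apply he
  have h' := (Finset.sum_eq_zero_iff_of_nonneg
    (fun i _ => Quaternion.normSq_nonneg (a := e i 0))).mp h
  refine Matrix.ext fun i j => ?_
  obtain rfl : j = 0 := Subsingleton.elim _ _
  simpa [Quaternion.normSq_eq_zero] using h' i (Finset.mem_univ i)

lemma col_sum_normSq_nonneg {m : Type} [Fintype m] (d : Matrix m (Fin 1) ℍ) :
    0 ≤ (∑ i, Quaternion.normSq (d i 0) : ℝ) :=
  Finset.sum_nonneg fun i _ => Quaternion.normSq_nonneg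

/-- Greville's recursion step: appending one column. -/
lemma greville {m n : Type} [Fintype m] [Fintype n] [DecidableEq m] [DecidableEq n]
    (B : Matrix m n ℍ) (c : Matrix m (Fin 1) ℍ) (G : Matrix n m ℍ) (hG : IsMP B G) :
    ∃ X, IsMP (fromCols B c) X := by
  obtain ⟨g1, g2, g3, g4⟩ := hG
  set d : Matrix n (Fin 1) ℍ := G * c with hd
  set e : Matrix m (Fin 1) ℍ := c - B * d with he
  have heB : eᴴ * B = 0 := by
    have h1 : e = c - B * G * c := by rw [he, Matrix.mul_assoc]
    rw [h1, Matrix.conjTranspose_sub, Matrix.sub_mul, Matrix.conjTranspose_mul, g3,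
      Matrix.mul_assoc, Matrix.mul_assoc, ← Matrix.mul_assoc B G B, g1, sub_self]
  have hGBd : G * B * d = d := by
    rw [hd, ← Matrix.mul_assoc (G * B) G c, g2]
  by_cases he0 : e = 0
  · -- dependent column case
    have hc : c = B * d := by rwa [he, sub_eq_zero] at he0
    set t : ℝ := ∑ i, Quaternion.normSq (d i 0) with ht
    set μ : ℝ := (1 + t)⁻¹ with hμdef
    have ht0 : (0:ℝ) ≤ t := col_sum_normSq_nonneg d
    have hμ : μ * (1 + t) = 1 := inv_mul_cancel₀ (by linarith)
    have hμ' : μ + μ * t = 1 := by rw [← hμ]; ring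
    set k : Matrix (Fin 1) m ℍ := μ • (dᴴ * G) with hk
    have hdGB : dᴴ * (G * B) = dᴴ := by
      rw [← g4, ← Matrix.conjTranspose_mul, hGBd]
    have hkB : k * B = μ • dᴴ := by
      rw [hk, Matrix.smul_mul, Matrix.mul_assoc, hdGB]
    have hdd : dᴴ * d = t • (1 : Matrix (Fin 1) (Fin 1) ℍ) := col_herm_mul_self d
    have hkc : k * c = (μ * t) • (1 : Matrix (Fin 1) (Fin 1) ℍ) := by
      rw [hc, ← Matrix.mul_assoc, hkB, Matrix.smul_mul, hdd, smul_smul]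
    have hBGc : B * G * c = c := by
      conv_lhs => rw [hc]
      rw [Matrix.mul_assoc B G (B*d), ← Matrix.mul_assoc G B d, ← Matrix.mul_assoc B (G*B) d,
        ← Matrix.mul_assoc B G B, g1, ← hc]
    have hAX : fromCols B c * fromRows (G - d * k) k = B * G := by
      rw [fromCols_mul_fromRows, Matrix.mul_sub, ← Matrix.mul_assoc B d k, ← hc,
        sub_add_cancel]
    have hdk_top : (G - d * k) * B = G * B - μ • (d * dᴴ) := by
      rw [Matrix.sub_mul, Matrix.mul_assoc, hkB, Matrix.mul_smul]
    have hdk_c : (G - d * k) * c = μ • d := by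
      rw [Matrix.sub_mul, Matrix.mul_assoc, hkc, Matrix.mul_smul, Matrix.mul_one, ← hd,
        show d - (μ * t) • d = (1 - μ * t) • d by rw [sub_smul, one_smul]]
      congr 1
      linarith [hμ']
    have hXA : fromRows (G - d * k) k * fromCols B c
        = fromBlocks (G * B - μ • (d * dᴴ)) (μ • d) (μ • dᴴ) ((μ * t) • 1) := by
      rw [fromRows_mul_fromCols, hdk_top, hdk_c, hkB, hkc]
    have hμ0 : μ ≠ 0 := by intro h0; rw [h0, zero_mul] at hμ; simp at hμ
    have hddG : d * dᴴ * G = μ⁻¹ • (d * k) := by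
      rw [hk, Matrix.mul_smul, smul_smul, inv_mul_cancel₀ hμ0, one_smul, Matrix.mul_assoc]
    have hddk : d * dᴴ * (d * k) = t • (d * k) := by
      rw [Matrix.mul_assoc d dᴴ (d*k), ← Matrix.mul_assoc dᴴ d k, hdd,
        Matrix.smul_mul, Matrix.one_mul, Matrix.mul_smul]
    have hexp : μ • (d * dᴴ) * (G - d * k) = d * k - (μ * t) • (d * k) := by
      rw [Matrix.smul_mul, Matrix.mul_sub, hddG, hddk, smul_sub, smul_smul, smul_smul,
        mul_inv_cancel₀ hμ0, one_smul]
    have htop : (G * B - μ • (d * dᴴ)) * (G - d * k) + μ • d * k = G - d * k := by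
      rw [Matrix.sub_mul, Matrix.mul_sub, g2, ← Matrix.mul_assoc (G*B) d k, hGBd, hexp,
        Matrix.smul_mul]
      match_scalars <;> ring_nf <;> linarith [hμ']
    have hbot : μ • dᴴ * (G - d * k) + (μ * t) • (1:Matrix (Fin 1) (Fin 1) ℍ) * k = k := by
      rw [Matrix.smul_mul, Matrix.smul_mul, Matrix.one_mul, Matrix.mul_sub,
        show dᴴ * (d * k) = t • k by
          rw [← Matrix.mul_assoc, hdd, Matrix.smul_mul, Matrix.one_mul],
        smul_sub, smul_smul, hk]
      match_scalars <;> ring_nf <;> linarith [hμ']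
    refine ⟨fromRows (G - d * k) k, ?_, ?_, ?_, ?_⟩
    · rw [hAX, mul_fromCols, g1, hBGc]
    · rw [hXA, fromBlocks_mul_fromRows, htop, hbot]
    · rw [hAX, g3]
    · rw [hXA, fromBlocks_conjTranspose, Matrix.conjTranspose_sub, g4, conjT_smul,
        Matrix.conjTranspose_mul, Matrix.conjTranspose_conjTranspose, conjT_smul,
        Matrix.conjTranspose_conjTranspose, conjT_smul, conjT_smul, Matrix.conjTranspose_one]
  · -- independent column case
    set s : ℝ := ∑ i, Quaternion.normSq (e i 0) with hs
    have hs0 : s ≠ 0 := col_sum_normSq_ne he0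
    set k : Matrix (Fin 1) m ℍ := s⁻¹ • eᴴ with hk
    have hee : eᴴ * e = s • (1 : Matrix (Fin 1) (Fin 1) ℍ) := col_herm_mul_self e
    have hke : k * e = 1 := by
      rw [hk, Matrix.smul_mul, hee, smul_smul, inv_mul_cancel₀ hs0, one_smul]
    have hkB : k * B = 0 := by rw [hk, Matrix.smul_mul, heB, smul_zero]
    have hceq : c = B * d + e := by rw [he]; abel
    have hkc : k * c = 1 := by
      rw [hceq, Matrix.mul_add, ← Matrix.mul_assoc, hkB, Matrix.zero_mul, zero_add, hke]
    have hAX : fromCols B c * fromRows (G - d * k) k = B * G + e * k := by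
      rw [fromCols_mul_fromRows, Matrix.mul_sub, ← Matrix.mul_assoc B d k]
      conv_lhs => rw [hceq]
      rw [Matrix.add_mul]
      abel
    have hXA : fromRows (G - d * k) k * fromCols B c = fromBlocks (G * B) 0 0 1 := by
      rw [fromRows_mul_fromCols,
        show (G - d * k) * B = G * B by
          rw [Matrix.sub_mul, Matrix.mul_assoc, hkB, Matrix.mul_zero, sub_zero],
        show (G - d * k) * c = 0 by
          rw [Matrix.sub_mul, Matrix.mul_assoc, hkc, Matrix.mul_one, ← hd, sub_self],
        hkB, hkc]
    refine ⟨fromRows (G - d * k) k, ?_, ?_, ?_, ?_⟩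
    · rw [hAX, Matrix.add_mul, mul_fromCols, mul_fromCols, g1,
        Matrix.mul_assoc e k B, hkB, Matrix.mul_zero, Matrix.mul_assoc e k c, hkc,
        Matrix.mul_one, Matrix.mul_assoc B G c, ← hd]
      refine Matrix.ext fun i j => ?_
      rcases j with j | j <;>
        simp only [Matrix.add_apply, Matrix.fromCols_apply_inl, Matrix.fromCols_apply_inr,
          Matrix.zero_apply, zero_add, add_zero]
      conv_rhs => rw [hceq]
      rw [Matrix.add_apply]
    · rw [hXA, fromBlocks_mul_fromRows, Matrix.zero_mul, add_zero, Matrix.zero_mul,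
        Matrix.one_mul, zero_add, Matrix.mul_sub, g2,
        show G * B * (d * k) = d * k by
          rw [← Matrix.mul_assoc (G*B) d k, hGBd]]
    · rw [hAX, Matrix.conjTranspose_add, g3]
      congr 1
      rw [hk, Matrix.mul_smul, conjT_smul, Matrix.conjTranspose_mul,
        Matrix.conjTranspose_conjTranspose]
    · rw [hXA, fromBlocks_conjTranspose]
      simp [g4]



lemma isMP_submatrix {m n m' n' : Type} [Fintype m] [Fintype n] [Fintype m'] [Fintype n']
    (em : m' ≃ m) (en : n' ≃ n) {A : Matrix m n ℍ} {X : Matrix n m ℍ} (h : IsMP A X) :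
    IsMP (A.submatrix em en) (X.submatrix en em) := by
  obtain ⟨h1, h2, h3, h4⟩ := h
  refine ⟨?_, ?_, ?_, ?_⟩
  · rw [Matrix.submatrix_mul_equiv, Matrix.submatrix_mul_equiv, h1]
  · rw [Matrix.submatrix_mul_equiv, Matrix.submatrix_mul_equiv, h2]
  · rw [Matrix.submatrix_mul_equiv, Matrix.conjTranspose_submatrix, h3]
  · rw [Matrix.submatrix_mul_equiv, Matrix.conjTranspose_submatrix, h4]

lemma exists_isMP_fin (m n : ℕ) : ∀ A : Matrix (Fin m) (Fin n) ℍ, ∃ X, IsMP A X := by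
  induction n with
  | zero =>
    intro A
    refine ⟨0, ?_, by simp, by simp, by simp⟩
    refine Matrix.ext fun i j => j.elim0
  | succ n ih =>
    intro A
    set q : Fin n ⊕ Fin 1 ≃ Fin (n + 1) := finSumFinEquiv with hq
    set A' := A.submatrix (Equiv.refl (Fin m)) q with hA'
    obtain ⟨G, hG⟩ := ih A'.toCols₁
    obtain ⟨X, hX⟩ := greville A'.toCols₁ A'.toCols₂ G hG
    rw [fromCols_toCols A'] at hX
    have h2 := isMP_submatrix (Equiv.refl (Fin m)) q.symm hX
    have hAe : A'.submatrix (Equiv.refl (Fin m)) q.symm = A := by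
      rw [hA', Matrix.submatrix_submatrix]
      refine Matrix.ext fun i j => ?_
      simp [Matrix.submatrix_apply]
    rw [hAe] at h2
    exact ⟨_, h2⟩

theorem exists_isMP {m n : Type} [Fintype m] [Fintype n] (A : Matrix m n ℍ) :
    ∃ X, IsMP A X := by
  have em := Fintype.equivFin m
  have en := Fintype.equivFin n
  obtain ⟨X, hX⟩ := exists_isMP_fin _ _ (A.submatrix em.symm en.symm)
  have h2 := isMP_submatrix em en hX
  have hAe : (A.submatrix (⇑em.symm) (⇑en.symm)).submatrix em en = A := by
    rw [Matrix.submatrix_submatrix]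
    refine Matrix.ext fun i j => ?_
    simp [Matrix.submatrix_apply]
  rw [hAe] at h2
  exact ⟨_, h2⟩

end MPAux

theorem mp_isMP {m n : Type} [Fintype m] [Fintype n] (A : Matrix m n (Quaternion ℝ)) :
    IsMP A (mp A) := by
  rw [mp, dif_pos (MPAux.exists_isMP A)]
  exact (MPAux.exists_isMP A).choose_spec

-- ## toolkit

section Toolkit

local notation "ℍ" => Quaternion ℝ

variable {m n : Type} [Fintype m] [Fintype n] [DecidableEq m] [DecidableEq n]
  (A : Matrix m n ℍ)

lemma mp1 : A * mp A * A = A := (mp_isMP A).1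
lemma mp2 : mp A * A * mp A = mp A := (mp_isMP A).2.1
lemma mp3 : (A * mp A)ᴴ = A * mp A := (mp_isMP A).2.2.1
lemma mp4 : (mp A * A)ᴴ = mp A * A := (mp_isMP A).2.2.2

lemma projR_mul : projR A * A = 0 := by
  rw [projR, Matrix.sub_mul, Matrix.one_mul, mp1, sub_self]

lemma mul_projL : A * projL A = 0 := by
  rw [projL, Matrix.mul_sub, Matrix.mul_one, ← Matrix.mul_assoc, mp1, sub_self]

lemma mp_mul_projR : mp A * projR A = 0 := by
  rw [projR, Matrix.mul_sub, Matrix.mul_one, ← Matrix.mul_assoc, mp2, sub_self]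

lemma projL_mul_mp : projL A * mp A = 0 := by
  rw [projL, Matrix.sub_mul, Matrix.one_mul, Matrix.mul_assoc, ← Matrix.mul_assoc, mp2, sub_self]

lemma projR_conjT : (projR A)ᴴ = projR A := by
  rw [projR, Matrix.conjTranspose_sub, Matrix.conjTranspose_one, mp3]

lemma projL_conjT : (projL A)ᴴ = projL A := by
  rw [projL, Matrix.conjTranspose_sub, Matrix.conjTranspose_one, mp4]

lemma projR_projR : projR A * projR A = projR A := by
  nth_rewrite 2 [projR]
  rw [Matrix.mul_sub, Matrix.mul_one, ← Matrix.mul_assoc, projR_mul, Matrix.zero_mul, sub_zero]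

lemma projL_projL : projL A * projL A = projL A := by
  nth_rewrite 1 [projL]
  rw [Matrix.sub_mul, Matrix.one_mul, Matrix.mul_assoc, mul_projL, Matrix.mul_zero, sub_zero]

-- tailed versions
lemma mul_projL_t {p : Type} [Fintype p] (x : Matrix n p ℍ) : A * (projL A * x) = 0 := by
  rw [← Matrix.mul_assoc, mul_projL, Matrix.zero_mul]

lemma projR_mul_t {p : Type} [Fintype p] (x : Matrix n p ℍ) : projR A * (A * x) = 0 := by
  rw [← Matrix.mul_assoc, projR_mul, Matrix.zero_mul]

end Toolkit

-- ## the core lemma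

section Core

local notation "ℍ" => Quaternion ℝ

set_option maxHeartbeats 1000000 in
theorem core_solution {m n q p l s : Type}
    [Fintype m] [Fintype n] [Fintype q] [Fintype p] [Fintype l] [Fintype s]
    [DecidableEq m] [DecidableEq n] [DecidableEq q] [DecidableEq p] [DecidableEq l]
    [DecidableEq s]
    (A0 : Matrix m q ℍ) (B0 : Matrix p n ℍ) (C0 : Matrix m l ℍ) (D0 : Matrix s n ℍ)
    (E0 : Matrix m n ℍ) (M : Matrix m l ℍ) (N : Matrix s n ℍ) (S : Matrix m l ℍ)
    (hM : M = projR A0 * C0) (hN : N = D0 * projL B0) (hS : S = C0 * projL M)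
    (hc1 : projR M * projR A0 * E0 = 0)
    (hc2 : E0 * projL B0 * projL N = 0)
    (hc3 : projR A0 * E0 * projL D0 = 0)
    (hc4 : projR C0 * E0 * projL B0 = 0)
    (V₁ V₂ V₃ : Matrix l s ℍ) (U₁ U₂ : Matrix q p ℍ) :
    A0 * (mp A0 * E0 * mp B0 - mp A0 * C0 * mp M * E0 * mp B0
        - mp A0 * S * mp C0 * E0 * mp N * D0 * mp B0
        - mp A0 * S * V₃ * (projR N * D0 * mp B0) + projL A0 * U₁ + U₂ * projR B0) * B0
      + C0 * (mp M * E0 * mp D0 + mp S * S * mp C0 * E0 * mp N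
        + projL M * projL S * V₁ + V₂ * projR D0 + projL M * V₃ * projR N) * D0
      = E0 := by
  -- basic derived facts
  have hMLM : M * projL M = 0 := mul_projL M
  have hRS : projR A0 * S = 0 := by
    rw [hS, ← Matrix.mul_assoc, ← hM, mul_projL]
  have hPS : A0 * (mp A0 * S) = S := by
    have h := hRS
    rw [projR, Matrix.sub_mul, Matrix.one_mul, Matrix.mul_assoc] at h
    exact (sub_eq_zero.mp h).symm
  have hPSt : ∀ {z : Type} [Fintype z] (x : Matrix l z (Quaternion ℝ)),
      A0 * (mp A0 * (S * x)) = S * x := by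
    intro z _ x
    rw [← Matrix.mul_assoc (mp A0) S x, ← Matrix.mul_assoc A0 (mp A0 * S) x, hPS]
  have hSLM : S * projL M = S := by rw [hS, Matrix.mul_assoc, projL_projL]
  have hSpSLM : mp S * S * projL M = mp S * S := by
    rw [Matrix.mul_assoc, hSLM]
  have hLMSpS : projL M * (mp S * S) = mp S * S := by
    calc projL M * (mp S * S) = ((mp S * S) * projL M)ᴴ := by
          rw [Matrix.conjTranspose_mul, mp4, projL_conjT]
      _ = mp S * S := by rw [hSpSLM, mp4]
  have hMSpS : M * (mp S * S) = 0 := by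
    rw [← hLMSpS, ← Matrix.mul_assoc, hMLM, Matrix.zero_mul]
  have hone : projL M + mp M * M = 1 := by rw [projL]; exact sub_add_cancel 1 (mp M * M)
  have hCSpS : C0 * (mp S * S) = S := by
    have hsplit : C0 * (mp S * S)
        = (C0 * projL M) * (mp S * S) + (C0 * (mp M * M)) * (mp S * S) := by
      rw [← Matrix.add_mul, ← Matrix.mul_add, hone, Matrix.mul_one]
    rw [hsplit, ← hS, ← Matrix.mul_assoc S (mp S) S, mp1,
      Matrix.mul_assoc C0 (mp M * M) (mp S * S), Matrix.mul_assoc (mp M) M (mp S * S), hMSpS,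
      Matrix.mul_zero, Matrix.mul_zero, add_zero]
  have hCSpSt : ∀ {z : Type} [Fintype z] (x : Matrix l z (Quaternion ℝ)),
      C0 * (mp S * (S * x)) = S * x := by
    intro z _ x
    rw [← Matrix.mul_assoc (mp S) S x, ← Matrix.mul_assoc C0 (mp S * S) x, hCSpS]
  have hCLMt : ∀ {z : Type} [Fintype z] (x : Matrix l z (Quaternion ℝ)),
      C0 * (projL M * x) = S * x := by
    intro z _ x
    rw [← Matrix.mul_assoc, ← hS]
  have hRAM : projR A0 * M = M := by rw [hM, ← Matrix.mul_assoc, projR_projR]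
  have hMMpRA : M * mp M * projR A0 = M * mp M := by
    have h1 : projR A0 * (M * mp M) = M * mp M := by rw [← Matrix.mul_assoc, hRAM]
    calc M * mp M * projR A0 = (projR A0 * (M * mp M))ᴴ := by
          rw [Matrix.conjTranspose_mul, mp3, projR_conjT]
      _ = M * mp M := by rw [h1, mp3]
  have hMpRA : mp M * projR A0 = mp M := by
    calc mp M * projR A0 = mp M * M * mp M * projR A0 := by rw [mp2]
      _ = mp M * (M * mp M * projR A0) := by
          rw [Matrix.mul_assoc (mp M) M (mp M), Matrix.mul_assoc]
      _ = mp M * (M * mp M) := by rw [hMMpRA]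
      _ = mp M := by rw [← Matrix.mul_assoc, mp2]
  have hMpP : mp M * (A0 * mp A0) = 0 := by
    rw [← hMpRA, Matrix.mul_assoc, projR_mul_t, Matrix.mul_zero]
  have hNLB : N * projL B0 = N := by rw [hN, Matrix.mul_assoc, projL_projL]
  have h2LB : projL B0 * (mp N * N) = mp N * N := by
    have h1 : mp N * N * projL B0 = mp N * N := by rw [Matrix.mul_assoc, hNLB]
    calc projL B0 * (mp N * N) = ((mp N * N) * projL B0)ᴴ := by
          rw [Matrix.conjTranspose_mul, projL_conjT, mp4]
      _ = mp N * N := by rw [h1, mp4]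
  -- consistency-derived facts
  have hMt : ∀ {z : Type} [Fintype z] (y : Matrix l z (Quaternion ℝ)),
      M * y = C0 * y - A0 * (mp A0 * (C0 * y)) := by
    intro z _ y
    rw [hM, projR, Matrix.sub_mul, Matrix.one_mul, Matrix.sub_mul, Matrix.mul_assoc,
      Matrix.mul_assoc]
  have c12 : M * (mp M * E0) = E0 - A0 * (mp A0 * E0) := by
    have h := hc1
    rw [projR, Matrix.sub_mul, Matrix.one_mul, Matrix.sub_mul,
      Matrix.mul_assoc M (mp M) (projR A0), hMpRA, projR, Matrix.sub_mul, Matrix.one_mul,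
      Matrix.mul_assoc, Matrix.mul_assoc] at h
    exact (sub_eq_zero.mp h).symm
  have hMpE_LD : mp M * (E0 * projL D0) = 0 := by
    rw [← hMpRA, Matrix.mul_assoc, ← Matrix.mul_assoc (projR A0) E0 (projL D0), hc3,
      Matrix.mul_zero]
  have hED : E0 * (mp D0 * D0) = E0 - E0 * projL D0 := by
    rw [projL, Matrix.mul_sub, Matrix.mul_one, sub_sub_cancel]
  have c13 : mp M * (E0 * (mp D0 * D0)) = mp M * E0 := by
    rw [hED, Matrix.mul_sub, hMpE_LD, sub_zero]
  have hDQ : D0 * (mp B0 * B0) = D0 - N := by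
    rw [hN, projL, Matrix.mul_sub, Matrix.mul_one, sub_sub_cancel]
  have hQE : E0 * (mp B0 * B0) = E0 - E0 * projL B0 := by
    rw [projL, Matrix.mul_sub, Matrix.mul_one, sub_sub_cancel]
  have c14 : E0 * projL B0 = E0 * (mp N * N) := by
    have h := hc2
    nth_rewrite 2 [projL] at h
    rw [Matrix.mul_sub, Matrix.mul_one, Matrix.mul_assoc, h2LB] at h
    exact sub_eq_zero.mp h
  have cCC : E0 * (mp N * N) = C0 * (mp C0 * (E0 * (mp N * N))) := by
    have h := hc4
    rw [projR, Matrix.sub_mul, Matrix.one_mul, Matrix.sub_mul, Matrix.mul_assoc,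
      Matrix.mul_assoc, c14] at h
    exact sub_eq_zero.mp h
  have hMX : M * (mp C0 * (E0 * (mp N * N)))
      = E0 * (mp N * N) - A0 * (mp A0 * (E0 * (mp N * N))) := by
    rw [hMt, ← cCC]
  have hMMX : mp M * (M * (mp C0 * (E0 * (mp N * N)))) = mp M * (E0 * (mp N * N)) := by
    rw [hMX, Matrix.mul_sub, ← Matrix.mul_assoc A0 (mp A0) (E0 * (mp N * N)),
      ← Matrix.mul_assoc (mp M) (A0 * mp A0) (E0 * (mp N * N)), hMpP, Matrix.zero_mul, sub_zero]
  have KEY : E0 * projL B0 - C0 * (mp M * (E0 * projL B0))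
      = S * (mp C0 * (E0 * (mp N * N))) := by
    have hSplit : S * (mp C0 * (E0 * (mp N * N)))
        = C0 * (mp C0 * (E0 * (mp N * N)))
          - C0 * (mp M * (M * (mp C0 * (E0 * (mp N * N))))) := by
      rw [hS, Matrix.mul_assoc C0 (projL M), projL, Matrix.sub_mul, Matrix.one_mul,
        Matrix.mul_sub, Matrix.mul_assoc (mp M) M]
    rw [hSplit, hMMX, ← cCC, c14]
  have KEY2 : A0 * (mp A0 * (E0 * projL B0))
        - A0 * (mp A0 * (C0 * (mp M * (E0 * projL B0))))
      = S * (mp C0 * (E0 * (mp N * N))) := by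
    have k1 : A0 * (mp A0 * (E0 * projL B0 - C0 * (mp M * (E0 * projL B0))))
        = A0 * (mp A0 * (S * (mp C0 * (E0 * (mp N * N))))) := by rw [KEY]
    rw [Matrix.mul_sub, Matrix.mul_sub, hPSt] at k1
    exact k1
  -- the termwise simplifications
  have T1 : A0 * (mp A0 * (E0 * (mp B0 * B0)))
      = A0 * (mp A0 * E0) - A0 * (mp A0 * (E0 * projL B0)) := by
    rw [hQE, Matrix.mul_sub, Matrix.mul_sub]
  have T2 : A0 * (mp A0 * (C0 * (mp M * (E0 * (mp B0 * B0)))))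
      = A0 * (mp A0 * (C0 * (mp M * E0)))
        - A0 * (mp A0 * (C0 * (mp M * (E0 * projL B0)))) := by
    rw [hQE, Matrix.mul_sub, Matrix.mul_sub, Matrix.mul_sub, Matrix.mul_sub]
  have T3 : A0 * (mp A0 * (S * (mp C0 * (E0 * (mp N * (D0 * (mp B0 * B0)))))))
      = S * (mp C0 * (E0 * (mp N * D0))) - S * (mp C0 * (E0 * (mp N * N))) := by
    rw [hPSt, hDQ, Matrix.mul_sub, Matrix.mul_sub, Matrix.mul_sub, Matrix.mul_sub]
  have T4 : A0 * (mp A0 * (S * (V₃ * (projR N * (D0 * (mp B0 * B0))))))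
      = S * (V₃ * (projR N * D0)) := by
    rw [hPSt, hDQ, Matrix.mul_sub, projR_mul, sub_zero]
  have T5 : A0 * (projL A0 * (U₁ * B0)) = 0 := mul_projL_t A0 _
  have T6 : A0 * (U₂ * (projR B0 * B0)) = 0 := by
    rw [projR_mul, Matrix.mul_zero, Matrix.mul_zero]
  have T7 : C0 * (mp M * (E0 * (mp D0 * D0)))
      = A0 * (mp A0 * (C0 * (mp M * E0))) + (E0 - A0 * (mp A0 * E0)) := by
    rw [c13, ← c12, hMt (mp M * E0)]
    abel
  have T8 : C0 * (mp S * (S * (mp C0 * (E0 * (mp N * D0)))))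
      = S * (mp C0 * (E0 * (mp N * D0))) := hCSpSt _
  have T9 : C0 * (projL M * (projL S * (V₁ * D0))) = 0 := by
    rw [hCLMt, mul_projL_t]
  have T10 : C0 * (V₂ * (projR D0 * D0)) = 0 := by
    rw [projR_mul, Matrix.mul_zero, Matrix.mul_zero]
  have T11 : C0 * (projL M * (V₃ * (projR N * D0))) = S * (V₃ * (projR N * D0)) := hCLMt _
  simp only [Matrix.add_mul, Matrix.sub_mul, Matrix.mul_add, Matrix.mul_sub, Matrix.mul_assoc]
  rw [T1, T2, T3, T4, T5, T6, T7, T8, T9, T10, T11, ← KEY2]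
  abel

end Core


-- ## the QData layer

namespace QData

variable {m k o n q p l s : Type}
  [Fintype m] [Fintype k] [Fintype o] [Fintype n] [Fintype q] [Fintype p]
  [Fintype l] [Fintype s]
  [DecidableEq m] [DecidableEq k] [DecidableEq o] [DecidableEq n]
  [DecidableEq q] [DecidableEq p] [DecidableEq l] [DecidableEq s]

/-- particular W-solution. -/
def Wp (d : QData m k o n q p l s) : Matrix l s (Quaternion ℝ) :=
  mp d.M * d.E0 * mp d.D0 + mp d.S * d.S * mp d.C0 * d.E0 * mp d.N

/-- particular Z-solution. -/
def Zp (d : QData m k o n q p l s) : Matrix q p (Quaternion ℝ) :=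
  mp d.A0 * d.E0 * mp d.B0 - mp d.A0 * d.C0 * mp d.M * d.E0 * mp d.B0
    - mp d.A0 * d.S * mp d.C0 * d.E0 * mp d.N * d.D0 * mp d.B0

/-- the affine family of W-solutions. -/
def Waff (d : QData m k o n q p l s) (V₁ V₂ V₃ : Matrix l s (Quaternion ℝ)) :
    Matrix l s (Quaternion ℝ) :=
  d.Wp + projL d.M * projL d.S * V₁ + V₂ * projR d.D0 + projL d.M * V₃ * projR d.N

/-- the affine family of Z-solutions. -/
def Zaff (d : QData m k o n q p l s) (V₃ : Matrix l s (Quaternion ℝ))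
    (U₁ U₂ : Matrix q p (Quaternion ℝ)) : Matrix q p (Quaternion ℝ) :=
  d.Zp - mp d.A0 * d.S * V₃ * (projR d.N * d.D0 * mp d.B0)
    + projL d.A0 * U₁ + U₂ * projR d.B0

theorem main (d : QData m k o n q p l s) (hd : d.Consistent)
    (V₁ V₂ V₃ : Matrix l s (Quaternion ℝ)) (U₁ U₂ : Matrix q p (Quaternion ℝ)) :
    d.A0 * d.Zaff V₃ U₁ U₂ * d.B0 + d.C0 * d.Waff V₁ V₂ V₃ * d.D0 = d.E0 := by
  obtain ⟨hc1, hc2, hc3, hc4⟩ := hd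
  have h := core_solution d.A0 d.B0 d.C0 d.D0 d.E0 d.M d.N d.S rfl rfl rfl
    hc1 hc2 hc3 hc4 V₁ V₂ V₃ U₁ U₂
  simp only [Zaff, Waff, Zp, Wp]
  exact h

theorem solve (d : QData m k o n q p l s) {Z : Matrix q p (Quaternion ℝ)}
    {W : Matrix l s (Quaternion ℝ)}
    (h : d.A0 * Z * d.B0 + d.C0 * W * d.D0 = d.E0) :
    ∃ (X : Matrix k n (Quaternion ℝ)) (Y : Matrix m o (Quaternion ℝ)),
      d.A * X + Y * d.B + d.C * Z * d.D + d.F * W * d.G = d.E := by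
  set T := d.E - d.C * Z * d.D - d.F * W * d.G with hT
  have e1 : projR d.A * (d.C * Z * d.D) * projL d.B = d.A0 * Z * d.B0 := by
    show _ = (projR d.A * d.C) * Z * (d.D * projL d.B)
    simp only [Matrix.mul_assoc]
  have e2 : projR d.A * (d.F * W * d.G) * projL d.B = d.C0 * W * d.D0 := by
    show _ = (projR d.A * d.F) * W * (d.G * projL d.B)
    simp only [Matrix.mul_assoc]
  have hRTL : projR d.A * T * projL d.B = 0 := by
    rw [hT, Matrix.mul_sub, Matrix.mul_sub, Matrix.sub_mul, Matrix.sub_mul, e1, e2,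
      show projR d.A * d.E * projL d.B = d.E0 from rfl, ← h]
    abel
  have hmpB : mp d.B * d.B = 1 - projL d.B := by rw [projL, sub_sub_cancel]
  have k1 : d.A * (mp d.A * T) = T - projR d.A * T := by
    rw [projR, Matrix.sub_mul, Matrix.one_mul, sub_sub_cancel, Matrix.mul_assoc]
  have k2 : (projR d.A * (T * mp d.B)) * d.B = projR d.A * T - projR d.A * T * projL d.B := by
    rw [Matrix.mul_assoc (projR d.A) (T * mp d.B) d.B, Matrix.mul_assoc T (mp d.B) d.B,
      hmpB, Matrix.mul_sub, Matrix.mul_one, Matrix.mul_sub,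
      ← Matrix.mul_assoc (projR d.A) T (projL d.B)]
  refine ⟨mp d.A * T, projR d.A * (T * mp d.B), ?_⟩
  rw [k1, k2, hRTL, sub_zero, hT]
  abel

theorem couple_eq {k' o' l' s' : Type}
    [Fintype k'] [Fintype o'] [Fintype l'] [Fintype s']
    [DecidableEq k'] [DecidableEq o'] [DecidableEq l'] [DecidableEq s']
    (d : QData m k o n q p l s) (d' : QData m k' o' n l s l' s')
    (X : Matrix (l ⊕ l) s (Quaternion ℝ)) (Y : Matrix l (s ⊕ s) (Quaternion ℝ))
    (Z : Matrix l s (Quaternion ℝ)) (W : Matrix l' s' (Quaternion ℝ))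
    (hsol : (d.couple d').A * X + Y * (d.couple d').B + (d.couple d').C * Z * (d.couple d').D
      + (d.couple d').F * W * (d.couple d').G = (d.couple d').E) :
    d.Waff (-X.toRows₁) (-Y.toCols₁) (-Z)
      = d'.Zaff (-W) (-X.toRows₂) (-Y.toCols₂) := by
  have hA : (d.couple d').A * X
      = projL d.M * projL d.S * X.toRows₁ - projL d'.A0 * X.toRows₂ := by
    conv_lhs => rw [show X = fromRows X.toRows₁ X.toRows₂ from (fromRows_toRows X).symm]
    rw [show (d.couple d').A = fromCols (projL d.M * projL d.S) (-(projL d'.A0)) from rfl,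
      fromCols_mul_fromRows, Matrix.neg_mul, ← sub_eq_add_neg]
  have hB : Y * (d.couple d').B
      = Y.toCols₁ * projR d.D0 - Y.toCols₂ * projR d'.B0 := by
    conv_lhs => rw [show Y = fromCols Y.toCols₁ Y.toCols₂
      from (fromCols_toCols Y).symm]
    rw [show (d.couple d').B = fromRows (projR d.D0) (-(projR d'.B0)) from rfl,
      fromCols_mul_fromRows, Matrix.mul_neg, ← sub_eq_add_neg]
  have hE : (d.couple d').E = d.Wp - d'.Zp := by
    show _ = _
    rw [Wp, Zp, show (d.couple d').E = mp d.M * d.E0 * mp d.D0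
      + mp d.S * d.S * mp d.C0 * d.E0 * mp d.N
      - mp d'.A0 * d'.E0 * mp d'.B0
      + mp d'.A0 * d'.C0 * mp d'.M * d'.E0 * mp d'.B0
      + mp d'.A0 * d'.S * mp d'.C0 * d'.E0 * mp d'.N * d'.D0 * mp d'.B0 from rfl]
    abel
  have final : d.Waff (-X.toRows₁) (-Y.toCols₁) (-Z)
        - d'.Zaff (-W) (-X.toRows₂) (-Y.toCols₂)
      = (d.couple d').E - ((d.couple d').A * X + Y * (d.couple d').B
        + (d.couple d').C * Z * (d.couple d').D
        + (d.couple d').F * W * (d.couple d').G) := by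
    rw [hA, hB, hE,
      show (d.couple d').C * Z * (d.couple d').D = projL d.M * Z * projR d.N from rfl,
      show (d.couple d').F * W * (d.couple d').G
        = mp d'.A0 * d'.S * W * (projR d'.N * d'.D0 * mp d'.B0) from rfl]
    rw [Waff, Zaff]
    simp only [Matrix.mul_neg, Matrix.neg_mul]
    abel
  rw [hsol, sub_self] at final
  exact sub_eq_zero.mp final

end QData


/-- If each data, each coupled data and the doubly coupled data satisfy the
consistency conditions, then the system
`Aᵢ Xᵢ + Yᵢ Bᵢ + Cᵢ Zᵢ Dᵢ + Fᵢ Z_{i+1} Gᵢ = Eᵢ` (i = 1, 2, 3) is solvable. -/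
theorem system_three_solvable_sufficient {m n q p k₁ k₂ k₃ o₁ o₂ o₃ : Type}
    [Fintype m] [Fintype n] [Fintype q] [Fintype p]
    [Fintype k₁] [Fintype k₂] [Fintype k₃] [Fintype o₁] [Fintype o₂] [Fintype o₃]
    [DecidableEq m] [DecidableEq n] [DecidableEq q] [DecidableEq p]
    [DecidableEq k₁] [DecidableEq k₂] [DecidableEq k₃]
    [DecidableEq o₁] [DecidableEq o₂] [DecidableEq o₃]
    (A₁ : Matrix m k₁ (Quaternion ℝ)) (A₂ : Matrix m k₂ (Quaternion ℝ))
    (A₃ : Matrix m k₃ (Quaternion ℝ))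
    (B₁ : Matrix o₁ n (Quaternion ℝ)) (B₂ : Matrix o₂ n (Quaternion ℝ))
    (B₃ : Matrix o₃ n (Quaternion ℝ))
    (C₁ C₂ C₃ F₁ F₂ F₃ : Matrix m q (Quaternion ℝ))
    (D₁ D₂ D₃ G₁ G₂ G₃ : Matrix p n (Quaternion ℝ))
    (E₁ E₂ E₃ : Matrix m n (Quaternion ℝ))
    (h₁ : (QData.mk A₁ B₁ C₁ D₁ F₁ G₁ E₁).Consistent)
    (h₂ : (QData.mk A₂ B₂ C₂ D₂ F₂ G₂ E₂).Consistent)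
    (h₃ : (QData.mk A₃ B₃ C₃ D₃ F₃ G₃ E₃).Consistent)
    (h₁₂ : ((QData.mk A₁ B₁ C₁ D₁ F₁ G₁ E₁).couple
      (QData.mk A₂ B₂ C₂ D₂ F₂ G₂ E₂)).Consistent)
    (h₂₃ : ((QData.mk A₂ B₂ C₂ D₂ F₂ G₂ E₂).couple
      (QData.mk A₃ B₃ C₃ D₃ F₃ G₃ E₃)).Consistent)
    (h₁₂₂₃ : (((QData.mk A₁ B₁ C₁ D₁ F₁ G₁ E₁).couple (QData.mk A₂ B₂ C₂ D₂ F₂ G₂ E₂)).couple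
      ((QData.mk A₂ B₂ C₂ D₂ F₂ G₂ E₂).couple (QData.mk A₃ B₃ C₃ D₃ F₃ G₃ E₃))).Consistent) :
    ∃ (X₁ : Matrix k₁ n (Quaternion ℝ)) (X₂ : Matrix k₂ n (Quaternion ℝ))
      (X₃ : Matrix k₃ n (Quaternion ℝ))
      (Y₁ : Matrix m o₁ (Quaternion ℝ)) (Y₂ : Matrix m o₂ (Quaternion ℝ))
      (Y₃ : Matrix m o₃ (Quaternion ℝ))
      (Z₁ Z₂ Z₃ Z₄ : Matrix q p (Quaternion ℝ)),
      A₁ * X₁ + Y₁ * B₁ + C₁ * Z₁ * D₁ + F₁ * Z₂ * G₁ = E₁ ∧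
      A₂ * X₂ + Y₂ * B₂ + C₂ * Z₂ * D₂ + F₂ * Z₃ * G₂ = E₂ ∧
      A₃ * X₃ + Y₃ * B₃ + C₃ * Z₃ * D₃ + F₃ * Z₄ * G₃ = E₃ := by
  set d₁ : QData m k₁ o₁ n q p q p := QData.mk A₁ B₁ C₁ D₁ F₁ G₁ E₁ with hd₁
  set d₂ : QData m k₂ o₂ n q p q p := QData.mk A₂ B₂ C₂ D₂ F₂ G₂ E₂ with hd₂
  set d₃ : QData m k₃ o₃ n q p q p := QData.mk A₃ B₃ C₃ D₃ F₃ G₃ E₃ with hd₃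
  set c₁₂ := d₁.couple d₂ with hc₁₂
  set c₂₃ := d₂.couple d₃ with hc₂₃
  set cc := c₁₂.couple c₂₃ with hcc
  -- step 1: solve the doubly coupled equation
  have hcccore := cc.main h₁₂₂₃ 0 0 0 0 0
  obtain ⟨Xc, Yc, hccsol⟩ := cc.solve hcccore
  have hT := QData.couple_eq c₁₂ c₂₃ Xc Yc (cc.Zaff 0 0 0) (cc.Waff 0 0 0) hccsol
  -- step 2: solve the two coupled equations with matching parameters
  have h12core := c₁₂.main h₁₂ (-Xc.toRows₁) (-Yc.toCols₁) (-(cc.Zaff 0 0 0)) 0 0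
  obtain ⟨X12, Y12, h12sol⟩ := c₁₂.solve h12core
  have hZ2 := QData.couple_eq d₁ d₂ X12 Y12 (c₁₂.Zaff (-(cc.Zaff 0 0 0)) 0 0)
    (c₁₂.Waff (-Xc.toRows₁) (-Yc.toCols₁) (-(cc.Zaff 0 0 0))) h12sol
  have h23core := c₂₃.main h₂₃ 0 0 (-(cc.Waff 0 0 0)) (-Xc.toRows₂) (-Yc.toCols₂)
  obtain ⟨X23, Y23, h23sol⟩ := c₂₃.solve h23core
  have hZ3 := QData.couple_eq d₂ d₃ X23 Y23
    (c₂₃.Zaff (-(cc.Waff 0 0 0)) (-Xc.toRows₂) (-Yc.toCols₂))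
    (c₂₃.Waff 0 0 (-(cc.Waff 0 0 0))) h23sol
  -- the common middle matrices
  set W12 := c₁₂.Waff (-Xc.toRows₁) (-Yc.toCols₁) (-(cc.Zaff 0 0 0)) with hW12
  set Z12 := c₁₂.Zaff (-(cc.Zaff 0 0 0)) 0 0 with hZ12
  set Z23 := c₂₃.Zaff (-(cc.Waff 0 0 0)) (-Xc.toRows₂) (-Yc.toCols₂) with hZ23def
  set W23 := c₂₃.Waff 0 0 (-(cc.Waff 0 0 0)) with hW23
  -- hT : W12 = Z23
  set Z₂ := d₂.Zaff (-W12) (-X12.toRows₂) (-Y12.toCols₂) with hZ₂def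
  set Z₃ := d₂.Waff (-X23.toRows₁) (-Y23.toCols₁) (-W12) with hZ₃def
  set Z₁ := d₁.Zaff (-Z12) 0 0 with hZ₁def
  set Z₄ := d₃.Waff 0 0 (-W23) with hZ₄def
  -- equation 1
  have h1core := d₁.main h₁ (-X12.toRows₁) (-Y12.toCols₁) (-Z12) 0 0
  rw [show d₁.Waff (-X12.toRows₁) (-Y12.toCols₁) (-Z12) = Z₂ from hZ2] at h1core
  obtain ⟨X₁, Y₁, hs1⟩ := d₁.solve h1core
  -- equation 2
  have h2core := d₂.main h₂ (-X23.toRows₁) (-Y23.toCols₁) (-W12)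
    (-X12.toRows₂) (-Y12.toCols₂)
  obtain ⟨X₂, Y₂, hs2⟩ := d₂.solve h2core
  -- equation 3
  have h3core := d₃.main h₃ 0 0 (-W23) (-X23.toRows₂) (-Y23.toCols₂)
  have hZ3' : Z₃ = d₃.Zaff (-W23) (-X23.toRows₂) (-Y23.toCols₂) := by
    rw [hZ₃def, hT]
    exact hZ3
  rw [← hZ3'] at h3core
  obtain ⟨X₃, Y₃, hs3⟩ := d₃.solve h3core
  exact ⟨X₁, X₂, X₃, Y₁, Y₂, Y₃, Z₁, Z₂, Z₃, Z₄, hs1, hs2, hs3⟩
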